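/- Let A be an infinite set, n ≥ 1, and E a finite subset of A. For each finitary partition P of A with exactly n non-singleton blocks, the number of finitary partitions Q of A with exactly n non-singleton blocks satisfying Q_E = P_E is at most (n+1)^{|E|}; that is, |{Q ∈ ℬₙ(A) : Q_E = P_E}| ≤ (n+1)^{|E|}. -/

import Mathlib

open Set

/-- A finitary partition of the whole type `α`: a family of pairwise disjoint
nonempty finite subsets whose union is everything. -/
def IsFinitaryPartition {α : Type*} (P : Set (Set α)) : Prop :=
  (∀ p ∈ P, p.Finite) ∧ (∀ p ∈ P, p.Nonempty) ∧
    (∀ p ∈ P, ∀ q ∈ P, p ≠ q → Disjoint p q) ∧ ⋃₀ P = Set.univ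

/-- The set of non-singleton blocks of a partition. -/
def nsBlocks {α : Type*} (P : Set (Set α)) : Set (Set α) :=
  {p ∈ P | p.Nontrivial}

/-- `ℬₙ(A)`: finitary partitions with exactly `n` non-singleton blocks. -/
def BPart (α : Type*) (n : ℕ) : Set (Set (Set α)) :=
  {P | IsFinitaryPartition P ∧ (nsBlocks P).Finite ∧ (nsBlocks P).ncard = n}

/-- `ℬ_fin(A)`: finitary partitions with finitely many non-singleton blocks. -/
def BFinPart (α : Type*) : Set (Set (Set α)) :=
  {P | IsFinitaryPartition P ∧ (nsBlocks P).Finite}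

/-- `𝒪ₙ(A)`: ordered `n`-tuples of pairwise disjoint finite subsets of `A`. -/
def OTuple (α : Type*) (n : ℕ) : Set (Fin n → Set α) :=
  {p | (∀ i, (p i).Finite) ∧ ∀ i j, i ≠ j → Disjoint (p i) (p j)}

/-- `P_E = {p \ E : p ∈ ns(P), p \ E ≠ ∅}`. -/
def projE {α : Type*} (E : Set α) (P : Set (Set α)) : Set (Set α) :=
  {s | ∃ p ∈ nsBlocks P, s = p \ E ∧ s ≠ ∅}

/-- Extend an injective-on-`O` function to an injective-on-`X` function. -/
lemma exists_injOn_extension {β γ : Type*} [Fintype γ] {X O : Set β}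
    (hX : X.Finite) (hO : O ⊆ X) (hcard : X.ncard ≤ Fintype.card γ)
    (f : β → γ) (hf : Set.InjOn f O) :
    ∃ g : β → γ, Set.InjOn g X ∧ ∀ x ∈ O, g x = f x := by
  classical
  rcases X.eq_empty_or_nonempty with rfl | hne
  · exact ⟨f, by simp, fun x hx => rfl⟩
  have hγ : Nonempty γ := by
    rw [← Fintype.card_pos_iff]
    have : 0 < X.ncard := (Set.ncard_pos hX).mpr hne
    omega
  have hOfin : O.Finite := hX.subset hO
  have himg : (f '' O).ncard = O.ncard := Set.ncard_image_of_injOn hf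
  have hles : (X \ O).ncard ≤ ((f '' O)ᶜ).ncard := by
    rw [Set.ncard_diff hO hOfin]
    have h1 : (f '' O).ncard + (f '' O)ᶜ.ncard = Fintype.card γ := by
      rw [Set.ncard_add_ncard_compl, Nat.card_eq_fintype_card]
    have h2 : O.ncard ≤ X.ncard := Set.ncard_le_ncard hO hX
    omega
  obtain ⟨g0, hg0m, hg0i⟩ := Set.Finite.exists_injOn_of_encard_le (t := (f '' O)ᶜ) (hX.diff (t := O))
    (by rw [← Set.Finite.cast_ncard_eq (hX.diff (t := O)), ← Set.Finite.cast_ncard_eq (Set.toFinite _)]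
        exact_mod_cast hles)
  refine ⟨fun x => if x ∈ O then f x else g0 x, ?_, fun x hx => by simp [hx]⟩
  intro a ha b hb hab
  by_cases haO : a ∈ O <;> by_cases hbO : b ∈ O <;> simp only [haO, hbO, if_pos, if_neg,
    if_true, if_false] at hab
  · exact hf haO hbO hab
  · exact absurd (hab ▸ Set.mem_image_of_mem f haO) (hg0m ⟨hb, hbO⟩)
  · exact absurd (hab.symm ▸ Set.mem_image_of_mem f hbO) (hg0m ⟨ha, haO⟩)
  · exact hg0i ⟨ha, haO⟩ ⟨hb, hbO⟩ hab

lemma block_unique {α : Type*} {Q : Set (Set α)} (hQ : IsFinitaryPartition Q)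
    {p q : Set α} (hp : p ∈ Q) (hq : q ∈ Q) {x : α} (hxp : x ∈ p) (hxq : x ∈ q) : p = q := by
  by_contra hne
  exact (hQ.2.2.1 p hp q hq hne).ne_of_mem hxp hxq rfl

lemma exists_block {α : Type*} {Q : Set (Set α)} (hQ : IsFinitaryPartition Q) (x : α) :
    ∃ p ∈ Q, x ∈ p := by
  have : x ∈ ⋃₀ Q := hQ.2.2.2 ▸ Set.mem_univ x
  exact this

lemma ns_subset_of_ns_eq {α : Type*} {Q1 Q2 : Set (Set α)}
    (h1 : IsFinitaryPartition Q1) (h2 : IsFinitaryPartition Q2)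
    (h : nsBlocks Q1 = nsBlocks Q2) : Q1 ⊆ Q2 := by
  intro p hp
  by_cases hnt : p.Nontrivial
  · have : p ∈ nsBlocks Q2 := h ▸ (⟨hp, hnt⟩ : p ∈ nsBlocks Q1)
    exact this.1
  · obtain ⟨x, hx⟩ := h1.2.1 p hp
    have hpx : p = {x} := by
      ext y; simp only [Set.mem_singleton_iff]
      exact ⟨fun hy => by
        by_contra hne
        exact hnt ⟨y, hy, x, hx, hne⟩, fun hy => hy ▸ hx⟩
    obtain ⟨q, hq, hxq⟩ := exists_block h2 x
    by_cases hqnt : q.Nontrivial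
    · have hq1 : q ∈ Q1 := by
        have : q ∈ nsBlocks Q1 := h.symm ▸ (⟨hq, hqnt⟩ : q ∈ nsBlocks Q2)
        exact this.1
      have := block_unique h1 hp hq1 (hpx ▸ rfl) hxq
      exact absurd (this ▸ hqnt) hnt
    · have hqx : q = {x} := by
        ext z; simp only [Set.mem_singleton_iff]
        exact ⟨fun hz => by
          by_contra hne
          exact hqnt ⟨z, hz, x, hxq, hne⟩, fun hz => hz ▸ hxq⟩
      rw [hpx, ← hqx]; exact hq

lemma eq_of_ns_eq {α : Type*} {Q1 Q2 : Set (Set α)}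
    (h1 : IsFinitaryPartition Q1) (h2 : IsFinitaryPartition Q2)
    (h : nsBlocks Q1 = nsBlocks Q2) : Q1 = Q2 :=
  (ns_subset_of_ns_eq h1 h2 h).antisymm (ns_subset_of_ns_eq h2 h1 h.symm)

lemma exists_label {α : Type*} (n : ℕ) (E : Set α) (S : Set (Set α)) (j : Set α → Fin n)
    (hj : Set.InjOn j S) {Q : Set (Set α)} (hQp : IsFinitaryPartition Q)
    (hfin : (nsBlocks Q).Finite) (hcard : (nsBlocks Q).ncard = n) (hproj : projE E Q = S) :
    ∃ ι : Set α → Fin n, Set.InjOn ι (nsBlocks Q) ∧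
      ∀ q ∈ nsBlocks Q, q \ E ≠ ∅ → ι q = j (q \ E) := by
  have hO : {q ∈ nsBlocks Q | q \ E ≠ ∅} ⊆ nsBlocks Q := Set.sep_subset _ _
  have hmemS : ∀ q ∈ nsBlocks Q, q \ E ≠ ∅ → q \ E ∈ S := fun q hq hne =>
    hproj ▸ ⟨q, hq, rfl, hne⟩
  have hfO : Set.InjOn (fun q => j (q \ E)) {q ∈ nsBlocks Q | q \ E ≠ ∅} := by
    rintro q1 ⟨hq1, hne1⟩ q2 ⟨hq2, hne2⟩ hjj
    have hde : q1 \ E = q2 \ E := hj (hmemS _ hq1 hne1) (hmemS _ hq2 hne2) hjj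
    obtain ⟨x, hx⟩ := Set.nonempty_iff_ne_empty.mpr hne1
    exact block_unique hQp hq1.1 hq2.1 hx.1 (hde ▸ hx).1
  obtain ⟨ι, hι1, hι2⟩ := exists_injOn_extension (γ := Fin n) hfin hO
    (by simp [hcard]) _ hfO
  exact ⟨ι, hι1, fun q hq hne => hι2 q ⟨hq, hne⟩⟩

/-- For every infinite set `A`, `n ≥ 1`, finite `E ⊆ A` and `P ∈ ℬₙ(A)`,
`|{Q ∈ ℬₙ(A) : Q_E = P_E}| ≤ (n+1)^{|E|}`. -/
theorem statement14 {α : Type*} [Infinite α] (n : ℕ) (hn : 1 ≤ n)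
    (E : Set α) (hE : E.Finite) (P : Set (Set α)) (hP : P ∈ BPart α n) :
    Cardinal.mk ↥{Q | Q ∈ BPart α n ∧ projE E Q = projE E P} ≤
      (((n + 1) ^ E.ncard : ℕ) : Cardinal) := by
  classical
  obtain ⟨hPpart, hPfin, hPcard⟩ := hP
  set S : Set (Set α) := projE E P with hSdef
  have hSsub : S ⊆ (fun p => p \ E) '' (nsBlocks P) := by
    rintro s ⟨p, hp, hs, -⟩
    exact ⟨p, hp, hs.symm⟩
  have hSfin : S.Finite := (hPfin.image _).subset hSsub
  have hScard : S.ncard ≤ n := le_trans (le_trans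
    (Set.ncard_le_ncard hSsub (hPfin.image _)) (Set.ncard_image_le hPfin)) hPcard.le
  have hFn : Nonempty (Fin n) := Fin.pos_iff_nonempty.mp hn
  obtain ⟨j, -, hjinj⟩ := Set.Finite.exists_injOn_of_encard_le
    (t := (Set.univ : Set (Fin n))) hSfin
    (by rw [← Set.Finite.cast_ncard_eq hSfin, ← Set.Finite.cast_ncard_eq (Set.toFinite _),
          Set.ncard_univ, Nat.card_eq_fintype_card, Fintype.card_fin]
        exact_mod_cast hScard)
  set T := {Q : Set (Set α) | Q ∈ BPart α n ∧ projE E Q = S} with hT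
  have hpart : ∀ Q ∈ T, IsFinitaryPartition Q := fun Q hQ => hQ.1.1
  have key : ∀ Q, Q ∈ T → ∃ ι : Set α → Fin n, Set.InjOn ι (nsBlocks Q) ∧
      ∀ q ∈ nsBlocks Q, q \ E ≠ ∅ → ι q = j (q \ E) := by
    rintro Q ⟨⟨hQp, hQfin, hQcard⟩, hQproj⟩
    exact exists_label n E S j hjinj hQp hQfin hQcard hQproj
  choose! ι hιinj hιj using key
  let Φ : ↥T → (↥E → Fin (n + 1)) := fun Q e =>
    if h : ∃ q, q ∈ nsBlocks Q.1 ∧ (e : α) ∈ q then (ι Q.1 h.choose).castSucc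
    else Fin.last n
  have hchar : ∀ (Q : ↥T) (e : ↥E), ∀ q ∈ nsBlocks Q.1,
      ((e : α) ∈ q ↔ Φ Q e = (ι Q.1 q).castSucc) := by
    intro Q e q hq
    constructor
    · intro he
      have h : ∃ q', q' ∈ nsBlocks Q.1 ∧ (e : α) ∈ q' := ⟨q, hq, he⟩
      have hc := h.choose_spec
      simp only [Φ, dif_pos h]
      exact congrArg _ (congrArg (ι Q.1)
        (block_unique (hpart _ Q.2) hc.1.1 hq.1 hc.2 he))
    · intro hval
      by_cases h : ∃ q', q' ∈ nsBlocks Q.1 ∧ (e : α) ∈ q'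
      · have hc := h.choose_spec
        simp only [Φ, dif_pos h] at hval
        have : h.choose = q := hιinj Q.1 Q.2 hc.1 hq (Fin.castSucc_injective n hval)
        exact this ▸ hc.2
      · simp only [Φ, dif_neg h] at hval
        exact absurd hval.symm (Fin.castSucc_lt_last _).ne
  have hchar2 : ∀ (Q : ↥T) (e : ↥E), Φ Q e ≠ Fin.last n →
      ∃ q ∈ nsBlocks Q.1, (e : α) ∈ q ∧ Φ Q e = (ι Q.1 q).castSucc := by
    intro Q e hne
    by_cases h : ∃ q', q' ∈ nsBlocks Q.1 ∧ (e : α) ∈ q'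
    · exact ⟨h.choose, h.choose_spec.1, h.choose_spec.2, by simp only [Φ, dif_pos h]⟩
    · exact absurd (by simp only [Φ, dif_neg h]) hne
  have outer : ∀ (QA QB : ↥T), ∀ q ∈ nsBlocks QA.1, q \ E ≠ ∅ →
      ∃ q' ∈ nsBlocks QB.1, q' \ E = q \ E ∧ ι QB.1 q' = ι QA.1 q := by
    intro QA QB q hq hne
    have hmem : q \ E ∈ S := QA.2.2 ▸ ⟨q, hq, rfl, hne⟩
    have hmem' : q \ E ∈ projE E QB.1 := QB.2.2.symm ▸ hmem
    obtain ⟨q', hq', heq, -⟩ := hmem'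
    refine ⟨q', hq', heq.symm, ?_⟩
    rw [hιj QB.1 QB.2 q' hq' (by rw [← heq]; exact hne),
      hιj QA.1 QA.2 q hq hne, heq]
  have hΦinj : Function.Injective Φ := by
    intro Q1 Q2 hΦ
    have cross : ∀ q1 ∈ nsBlocks Q1.1, ∀ q2 ∈ nsBlocks Q2.1,
        ι Q1.1 q1 = ι Q2.1 q2 → q1 = q2 := by
      intro q1 hq1 q2 hq2 hι
      have hIE : q1 ∩ E = q2 ∩ E := by
        ext a
        simp only [Set.mem_inter_iff]
        constructor
        · rintro ⟨ha, haE⟩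
          refine ⟨?_, haE⟩
          have h1 := (hchar Q1 ⟨a, haE⟩ q1 hq1).mp ha
          have h2 : Φ Q2 ⟨a, haE⟩ = (ι Q2.1 q2).castSucc := by
            rw [← hΦ, h1, hι]
          exact (hchar Q2 ⟨a, haE⟩ q2 hq2).mpr h2
        · rintro ⟨ha, haE⟩
          refine ⟨?_, haE⟩
          have h1 := (hchar Q2 ⟨a, haE⟩ q2 hq2).mp ha
          have h2 : Φ Q1 ⟨a, haE⟩ = (ι Q1.1 q1).castSucc := by
            rw [hΦ, h1, hι]
          exact (hchar Q1 ⟨a, haE⟩ q1 hq1).mpr h2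
      have hDE : q1 \ E = q2 \ E := by
        rcases eq_or_ne (q1 \ E) ∅ with h1 | h1
        · rcases eq_or_ne (q2 \ E) ∅ with h2 | h2
          · rw [h1, h2]
          · obtain ⟨q1', hq1', heq, hι'⟩ := outer Q2 Q1 q2 hq2 h2
            have he : q1' = q1 := hιinj Q1.1 Q1.2 hq1' hq1 (by rw [hι', ← hι])
            rw [← he, heq]
        · obtain ⟨q2', hq2', heq, hι'⟩ := outer Q1 Q2 q1 hq1 h1
          have he : q2' = q2 := hιinj Q2.1 Q2.2 hq2' hq2 (by rw [hι', hι])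
          rw [← he, heq]
      calc q1 = q1 ∩ E ∪ q1 \ E := (Set.inter_union_diff _ _).symm
        _ = q2 ∩ E ∪ q2 \ E := by rw [hIE, hDE]
        _ = q2 := Set.inter_union_diff _ _
    have partner : ∀ (QA QB : ↥T), (∀ e : ↥E, Φ QA e = Φ QB e) →
        ∀ q ∈ nsBlocks QA.1, ∃ q' ∈ nsBlocks QB.1, ι QB.1 q' = ι QA.1 q := by
      intro QA QB hab q hq
      rcases eq_or_ne (q \ E) ∅ with h0 | h0
      · obtain ⟨e0, he0⟩ := hq.2.nonempty
        have he0E : e0 ∈ E := by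
          have : q ⊆ E := by rwa [Set.diff_eq_empty] at h0
          exact this he0
        have h1 : Φ QA ⟨e0, he0E⟩ = (ι QA.1 q).castSucc :=
          (hchar QA ⟨e0, he0E⟩ q hq).mp he0
        have hne : Φ QB ⟨e0, he0E⟩ ≠ Fin.last n := by
          rw [← hab, h1]; exact (Fin.castSucc_lt_last _).ne
        obtain ⟨q', hq', -, hval⟩ := hchar2 QB ⟨e0, he0E⟩ hne
        refine ⟨q', hq', Fin.castSucc_injective n ?_⟩
        rw [← hval, ← hab, h1]
      · obtain ⟨q', hq', -, hι'⟩ := outer QA QB q hq h0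
        exact ⟨q', hq', hι'⟩
    have hns : nsBlocks Q1.1 = nsBlocks Q2.1 := by
      apply Set.Subset.antisymm
      · intro q hq
        obtain ⟨q', hq', hι'⟩ := partner Q1 Q2 (fun e => congrFun hΦ e) q hq
        have := cross q hq q' hq' hι'.symm
        exact this ▸ hq'
      · intro q hq
        obtain ⟨q', hq', hι'⟩ := partner Q2 Q1 (fun e => (congrFun hΦ e).symm) q hq
        have := cross q' hq' q hq hι'
        exact this ▸ hq'
    exact Subtype.ext (eq_of_ns_eq (hpart _ Q1.2) (hpart _ Q2.2) hns)
  calc Cardinal.mk ↥T ≤ Cardinal.mk (↥E → Fin (n + 1)) := Cardinal.mk_le_of_injective hΦinj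
    _ = (((n + 1) ^ E.ncard : ℕ) : Cardinal) := by
        haveI : Fintype ↥E := hE.fintype
        rw [Cardinal.mk_fintype]
        norm_cast
        rw [Fintype.card_fun, Fintype.card_fin, Set.ncard_eq_toFinset_card', Set.toFinset_card]
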